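/- arXiv:2105.07163 — 3 statements merged into one kernel-verified Lean document; each statement's English description precedes it below -/
import Mathlib

section
/- If V : ℝ → ℝ is even, convex on (0,∞), nonnegative, integrable with ∫ V = 1, and satisfies V''(z) ≥ λ·1(z < δ) on (0,∞) for some λ, δ > 0, then there exists c > 0 such that the Fourier transform v(ω) = ∫ V(x) e^{-2πixω} dx satisfies v(ω) ≥ c · min{1, |ω|^{-2}} for all ω ∈ ℝ. -/
open Real Set MeasureTheory intervalIntegral

lemma sinlb1 {t : ℝ} (h0 : 0 ≤ t) (h1 : t ≤ 1) : t ^ 3 / 9 ≤ t - Real.sin t := by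
  have hb := Real.sin_bound (x := t) (by rw [abs_of_nonneg h0]; exact h1)
  rw [abs_of_nonneg h0] at hb
  have h2 : Real.sin t - (t - t ^ 3 / 6) ≤ t ^ 5 / 100 := (abs_le.1 hb).2
  nlinarith [pow_le_pow_left₀ h0 h1 4, mul_le_mul_of_nonneg_left (pow_le_pow_left₀ h0 h1 2) (pow_nonneg h0 3), pow_nonneg h0 3, pow_nonneg h0 4, sq_nonneg t]

lemma sinlb2 {t : ℝ} (h1 : 1 ≤ t) : (1 - Real.sin 1) / 2 * t ≤ t - Real.sin t := by
  have hs1 : Real.sin 1 < 1 := by simpa using Real.sin_lt (x := 1) one_pos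
  rcases le_or_gt t 2 with h2 | h2
  · -- sin t ≤ sin 1 + (t - 1)
    have key : Real.sin t - Real.sin 1 ≤ t - 1 := by
      rw [Real.sin_sub_sin]
      have hs : 0 ≤ Real.sin ((t - 1) / 2) :=
        Real.sin_nonneg_of_nonneg_of_le_pi (by linarith) (by nlinarith [Real.pi_gt_three])
      have hsl : Real.sin ((t - 1) / 2) ≤ (t - 1) / 2 := Real.sin_le (by linarith)
      have hc : Real.cos ((t + 1) / 2) ≤ 1 := Real.cos_le_one _
      nlinarith [Real.neg_one_le_cos ((t + 1) / 2)]
    nlinarith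
  · have : Real.sin t ≤ 1 := Real.sin_le_one t
    nlinarith [Real.sin_le_one t, Real.sin_nonneg_of_nonneg_of_le_pi (le_of_lt one_pos) (by linarith [Real.pi_gt_three] : (1:ℝ) ≤ π)]

lemma maxsq_hasDeriv (b x : ℝ) :
    HasDerivAt (fun y => (max (b - y) 0)^2) (-(2 * max (b - x) 0)) x := by
  rcases lt_trichotomy x b with h | h | h
  · have h1 : HasDerivAt (fun y : ℝ => (b - y)^2) (-(2 * (b - x))) x := by
      have := (((hasDerivAt_id x).const_sub b).pow 2)
      refine this.congr_deriv ?_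
      simp
    have h2 : (fun y : ℝ => (max (b - y) 0)^2) =ᶠ[nhds x] (fun y => (b - y)^2) := by
      filter_upwards [Iio_mem_nhds h] with y hy
      rw [max_eq_left (by simp only [mem_Iio] at hy; linarith)]
    rw [max_eq_left (by linarith)]
    exact h1.congr_of_eventuallyEq h2
  · subst h
    rw [show (-(2 * max (x - x) 0)) = 0 by simp]
    rw [hasDerivAt_iff_tendsto_slope]
    have key : ∀ y : ℝ, |slope (fun y => (max (x - y) 0)^2) x y| ≤ |y - x| := by
      intro y
      rcases eq_or_ne y x with rfl | hy
      · simp [slope]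
      · rw [slope_def_field]
        have h0 : ((max (x - x) 0) : ℝ) = 0 := by simp
        rw [h0]
        have hyx : y - x ≠ 0 := sub_ne_zero.2 hy
        have hb : (max (x - y) 0)^2 ≤ (y - x)^2 := by
          rcases le_total (x - y) 0 with h | h
          · rw [max_eq_right h]
            simp only [ne_eq, OfNat.ofNat_ne_zero, not_false_eq_true, zero_pow]
            positivity
          · rw [max_eq_left h]; nlinarith
        rw [abs_div, div_le_iff₀ (abs_pos.2 hyx)]
        have habs : |(max (x - y) 0) ^ 2 - 0 ^ 2| = (max (x - y) 0)^2 := by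
          rw [show ((0:ℝ))^2 = 0 by ring, sub_zero, abs_of_nonneg (by positivity)]
        rw [habs]
        calc (max (x - y) 0)^2 ≤ (y - x)^2 := hb
          _ = |y - x| * |y - x| := by rw [← abs_mul]; rw [abs_of_nonneg (by nlinarith)]; ring
    apply squeeze_zero_norm (fun y => key y)
    have : Filter.Tendsto (fun y : ℝ => |y - x|) (nhds x) (nhds 0) := by
      have hc : Continuous (fun y : ℝ => |y - x|) :=
        (continuous_id.sub continuous_const).abs
      have := hc.tendsto x
      simpa using this
    exact this.mono_left nhdsWithin_le_nhds
  · have h2 : (fun y : ℝ => (max (b - y) 0)^2) =ᶠ[nhds x] (fun _ => (0:ℝ)) := by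
      filter_upwards [Ioi_mem_nhds h] with y hy
      rw [max_eq_right (by simp only [mem_Ioi] at hy; linarith)]; ring
    rw [max_eq_right (by linarith), mul_zero, neg_zero]
    exact (hasDerivAt_const x 0).congr_of_eventuallyEq h2

lemma Vdiff (V : ℝ → ℝ) (lam δ : ℝ) (hlam : 0 < lam) (hδ : 0 < δ)
    (hconv : ConvexOn ℝ (Set.Ioi 0) V)
    (hV'' : ∀ z : ℝ, 0 < z → z < δ → lam ≤ deriv (deriv V) z) :
    ∀ z ∈ Ioo (0:ℝ) δ, HasDerivAt V (deriv V z) z := by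
  set g := deriv V with hg
  -- g is differentiable on Ioo 0 δ
  have hgdiff : ∀ z ∈ Ioo (0:ℝ) δ, DifferentiableAt ℝ g z := by
    intro z hz
    by_contra h
    have : deriv g z = 0 := deriv_zero_of_not_differentiableAt h
    have := hV'' z hz.1 hz.2
    linarith
  -- differentiability points of V are dense in Ioo 0 δ
  have hdense : ∀ α β : ℝ, 0 ≤ α → β ≤ δ → α < β →
      ∃ p ∈ Ioo α β, DifferentiableAt ℝ V p := by
    intro α β hα hβ hαβ
    by_contra h
    push_neg at h
    have hz : (α + β) / 2 ∈ Ioo α β := ⟨by linarith, by linarith⟩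
    have hgz : g =ᶠ[nhds ((α + β)/2)] (fun _ => 0) := by
      filter_upwards [Ioo_mem_nhds hz.1 hz.2] with x hx
      exact deriv_zero_of_not_differentiableAt (h x hx)
    have : deriv g ((α + β)/2) = 0 := by
      rw [hgz.deriv_eq]; exact deriv_const _ _
    have := hV'' ((α + β)/2) (by linarith [hz.1]) (by linarith [hz.2])
    linarith
  intro z hz
  rw [hasDerivAt_iff_tendsto_slope]
  rw [Metric.tendsto_nhds]
  intro ε hε
  have hcg : ContinuousAt g z := (hgdiff z hz).continuousAt
  rcases Metric.continuousAt_iff.1 hcg ε hε with ⟨η₁, hη₁, hball⟩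
  -- pick differentiability points p < z < q close to z
  set η := min η₁ (min z (δ - z)) with hη
  have hηpos : 0 < η := lt_min hη₁ (lt_min hz.1 (by linarith [hz.2]))
  have hηz : η ≤ z := le_trans (min_le_right _ _) (min_le_left _ _)
  have hηδ : η ≤ δ - z := le_trans (min_le_right _ _) (min_le_right _ _)
  have hηη₁ : η ≤ η₁ := min_le_left _ _
  obtain ⟨p, hp, hpd⟩ := hdense (z - η) z (by linarith) (le_of_lt hz.2) (by linarith)
  obtain ⟨q, hq, hqd⟩ := hdense z (z + η) (le_of_lt hz.1) (by linarith) (by linarith)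
  have hpz : p < z := hp.2
  have hqz : z < q := hq.1
  have hp0 : p ∈ Ioi (0:ℝ) := by
    simp only [mem_Ioi]
    have := hp.1
    rcases lt_or_eq_of_le hηz with h | h
    · linarith
    · linarith
  have hq0 : q ∈ Ioi (0:ℝ) := by simp only [mem_Ioi]; linarith [hz.1, hq.1]
  -- |g p - g z| < ε and |g q - g z| < ε
  have hgp : dist (g p) (g z) < ε := hball (by
    have := hp.1
    rw [Real.dist_eq, abs_of_nonpos (by linarith)]
    linarith)
  have hgq : dist (g q) (g z) < ε := hball (by
    have := hq.2
    rw [Real.dist_eq, abs_of_nonneg (by linarith)]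
    linarith)
  rw [Real.dist_eq] at hgp hgq
  -- slope bounds
  have hmono := hconv.slope_mono (mem_Ioi.2 hz.1)
  filter_upwards [inter_mem_nhdsWithin _ (Ioo_mem_nhds hpz hqz)] with y hy
  obtain ⟨hyne, hy⟩ := hy
  have hyne' : y ≠ z := hyne
  have hy0 : y ∈ Ioi (0:ℝ) := by simp only [mem_Ioi]; linarith [hy.1, mem_Ioi.1 hp0]
  have hymem : y ∈ Ioi (0:ℝ) \ {z} := ⟨hy0, hyne'⟩
  have hpmem : p ∈ Ioi (0:ℝ) \ {z} := ⟨hp0, by simp; linarith⟩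
  have hqmem : q ∈ Ioi (0:ℝ) \ {z} := ⟨hq0, by simp; linarith⟩
  -- lower: g p ≤ slope V z p ≤ slope V z y
  have l1 : deriv V p ≤ slope V p z := hconv.deriv_le_slope hp0 (mem_Ioi.2 hz.1) hpz hpd
  have l2 : slope V z p ≤ slope V z y := hmono hpmem hymem (le_of_lt hy.1)
  have l3 : slope V z y ≤ slope V z q := hmono hymem hqmem (le_of_lt hy.2)
  have l4 : slope V z q ≤ deriv V q := hconv.slope_le_deriv (mem_Ioi.2 hz.1) hq0 hqz hqd
  rw [slope_comm] at l1
  rw [Real.dist_eq]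
  have : g p ≤ slope V z y := le_trans l1 l2
  have : slope V z y ≤ g q := le_trans l3 l4
  rw [abs_lt] at hgp hgq ⊢
  constructor <;> nlinarith [l1, l2, l3, l4, hgp.1, hgp.2, hgq.1, hgq.2]

lemma slope_glue1 {Rx Ry Rb Rz x y b z : ℝ} (hxy : x < y) (hyb : y < b) (hbz : b < z)
    (h1 : (Ry - Rx)/(y-x) ≤ (Rb - Ry)/(b-y)) (h2 : (Rb - Ry)/(b-y) ≤ (Rz - Rb)/(z-b)) :
    (Ry - Rx)/(y-x) ≤ (Rz - Ry)/(z-y) := by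
  set A := (Ry - Rx)/(y-x) with hA
  have hby : (0:ℝ) < b - y := by linarith
  have hzb : (0:ℝ) < z - b := by linarith
  have hzy : (0:ℝ) < z - y := by linarith
  have e1 : Rb - Ry = ((Rb - Ry)/(b-y))*(b-y) := by field_simp
  have e2 : Rz - Rb = ((Rz - Rb)/(z-b))*(z-b) := by field_simp
  rw [le_div_iff₀ hzy]
  have k1 : A * (b - y) ≤ ((Rb - Ry)/(b-y))*(b-y) := mul_le_mul_of_nonneg_right h1 hby.le
  have k2 : ((Rb - Ry)/(b-y)) * (z-b) ≤ ((Rz - Rb)/(z-b))*(z-b) :=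
    mul_le_mul_of_nonneg_right h2 hzb.le
  have k3 : A * (z - b) ≤ ((Rb - Ry)/(b-y))*(z-b) := mul_le_mul_of_nonneg_right h1 hzb.le
  nlinarith [k1, k2, k3]

lemma slope_glue2 {Rx Rb Ry Rz x b y z : ℝ} (hxb : x < b) (hby : b < y) (hyz : y < z)
    (h1 : (Rb - Rx)/(b-x) ≤ (Ry - Rb)/(y-b)) (h2 : (Ry - Rb)/(y-b) ≤ (Rz - Ry)/(z-y)) :
    (Ry - Rx)/(y-x) ≤ (Rz - Ry)/(z-y) := by
  have hbx : (0:ℝ) < b - x := by linarith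
  have hyb : (0:ℝ) < y - b := by linarith
  have hyx : (0:ℝ) < y - x := by linarith
  have e1 : Rb - Rx = ((Rb - Rx)/(b-x))*(b-x) := by field_simp
  have e2 : Ry - Rb = ((Ry - Rb)/(y-b))*(y-b) := by field_simp
  have key : (Ry - Rx)/(y-x) ≤ (Ry - Rb)/(y-b) := by
    rw [div_le_iff₀ hyx]
    have k1 : ((Rb - Rx)/(b-x))*(b-x) ≤ ((Ry - Rb)/(y-b))*(b-x) :=
      mul_le_mul_of_nonneg_right h1 hbx.le
    nlinarith [k1]
  exact le_trans key h2

lemma convexOn_congr {s : Set ℝ} {f h : ℝ → ℝ} (hf : ConvexOn ℝ s f)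
    (heq : Set.EqOn f h s) : ConvexOn ℝ s h := by
  refine ⟨hf.1, fun x hx y hy a b ha hb hab => ?_⟩
  rw [← heq hx, ← heq hy, ← heq (hf.1 hx hy ha hb hab)]
  exact hf.2 hx hy ha hb hab

lemma Rconv (V : ℝ → ℝ) (lam δ : ℝ) (hlam : 0 < lam) (hδ : 0 < δ)
    (hconv : ConvexOn ℝ (Set.Ioi 0) V)
    (hVd : ∀ z ∈ Ioo (0:ℝ) δ, HasDerivAt V (deriv V z) z)
    (hV'' : ∀ z : ℝ, 0 < z → z < δ → lam ≤ deriv (deriv V) z) :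
    ConvexOn ℝ (Set.Ioi 0)
      (fun x => V x - lam/2 * (max (δ/2 - |x|) 0)^2) := by
  set b := δ/2 with hbdef
  have hb : 0 < b := by positivity
  have hbδ : b < δ := by rw [hbdef]; linarith
  set g := deriv V with hg
  set W : ℝ → ℝ := fun x => lam/2 * (max (b - |x|) 0)^2 with hW
  set R : ℝ → ℝ := fun x => V x - W x with hR
  have hgd : ∀ z ∈ Ioo (0:ℝ) δ, DifferentiableAt ℝ g z := by
    intro z hz
    by_contra h
    have h0 : deriv g z = 0 := deriv_zero_of_not_differentiableAt h
    have := hV'' z hz.1 hz.2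
    linarith
  -- derivative of W on positive reals
  have hWd : ∀ x : ℝ, 0 < x → HasDerivAt W (-(lam * max (b - x) 0)) x := by
    intro x hx
    have h1 : HasDerivAt (fun y => lam/2 * (max (b - y) 0)^2)
        (lam/2 * (-(2 * max (b - x) 0))) x := (maxsq_hasDeriv b x).const_mul (lam/2)
    have h2 : W =ᶠ[nhds x] (fun y => lam/2 * (max (b - y) 0)^2) := by
      filter_upwards [Ioi_mem_nhds hx] with y hy
      simp only [hW]
      rw [abs_of_pos (mem_Ioi.1 hy)]
    have h3 := h1.congr_of_eventuallyEq h2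
    exact h3.congr_deriv (by ring)
  set φ : ℝ → ℝ := fun x => g x + lam * max (b - x) 0 with hφ
  have hRd : ∀ x ∈ Ioo (0:ℝ) δ, HasDerivAt R (φ x) x := by
    intro x hx
    have := (hVd x hx).sub (hWd x hx.1)
    refine this.congr_deriv ?_
    simp only [hφ]; ring
  -- φ is monotone on Ioo 0 δ
  have m1 : MonotoneOn φ (Ioc 0 b) := by
    apply monotoneOn_of_deriv_nonneg (convex_Ioc 0 b)
    · apply ContinuousOn.add
      · intro x hx
        exact ((hgd x ⟨hx.1, lt_of_le_of_lt hx.2 hbδ⟩).continuousAt).continuousWithinAt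
      · exact (continuous_const.mul ((continuous_const.sub continuous_id).max
          continuous_const)).continuousOn
    · rw [interior_Ioc]
      intro x hx
      have hx' : x ∈ Ioo (0:ℝ) δ := ⟨hx.1, lt_trans hx.2 hbδ⟩
      have heq : φ =ᶠ[nhds x] (fun y => g y + lam * (b - y)) := by
        filter_upwards [Iio_mem_nhds hx.2] with y hy
        simp only [hφ]
        rw [max_eq_left (by simp only [mem_Iio] at hy; linarith)]
      have hlin : HasDerivAt (fun y : ℝ => b - y) (-1) x := by
        simpa using (hasDerivAt_id x).const_sub b
      have hψd : HasDerivAt (fun y => g y + lam * (b - y)) (deriv g x + lam * (-1)) x :=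
        (hgd x hx').hasDerivAt.add (hlin.const_mul lam)
      exact ((hψd.differentiableAt).congr_of_eventuallyEq heq).differentiableWithinAt
    · rw [interior_Ioc]
      intro x hx
      have hx' : x ∈ Ioo (0:ℝ) δ := ⟨hx.1, lt_trans hx.2 hbδ⟩
      have heq : φ =ᶠ[nhds x] (fun y => g y + lam * (b - y)) := by
        filter_upwards [Iio_mem_nhds hx.2] with y hy
        simp only [hφ]
        rw [max_eq_left (by simp only [mem_Iio] at hy; linarith)]
      rw [heq.deriv_eq]
      have hlin : HasDerivAt (fun y : ℝ => b - y) (-1) x := by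
        simpa using (hasDerivAt_id x).const_sub b
      have hd : HasDerivAt (fun y => g y + lam * (b - y)) (deriv g x + lam * (-1)) x :=
        (hgd x hx').hasDerivAt.add (hlin.const_mul lam)
      rw [hd.deriv]
      have := hV'' x hx'.1 hx'.2
      linarith
  have m2 : MonotoneOn φ (Ico b δ) := by
    have m2' : MonotoneOn g (Ico b δ) := by
      apply monotoneOn_of_deriv_nonneg (convex_Ico b δ)
      · intro x hx
        exact ((hgd x ⟨lt_of_lt_of_le hb hx.1, hx.2⟩).continuousAt).continuousWithinAt
      · rw [interior_Ico]
        intro x hx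
        exact (hgd x ⟨lt_trans hb hx.1, hx.2⟩).differentiableWithinAt
      · rw [interior_Ico]
        intro x hx
        have := hV'' x (lt_trans hb hx.1) hx.2
        linarith
    intro x hx y hy hxy
    have e1 : φ x = g x := by
      simp only [hφ]; rw [max_eq_right (by linarith [hx.1])]; ring
    have e2 : φ y = g y := by
      simp only [hφ]; rw [max_eq_right (by linarith [hy.1])]; ring
    rw [e1, e2]; exact m2' hx hy hxy
  have mφ : MonotoneOn φ (Ioo 0 δ) := by
    intro x hx y hy hxy
    rcases le_total y b with h | h
    · exact m1 ⟨hx.1, le_trans hxy h⟩ ⟨hy.1, h⟩ hxy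
    · rcases le_total b x with h' | h'
      · exact m2 ⟨h', hx.2⟩ ⟨h, hy.2⟩ hxy
      · calc φ x ≤ φ b := m1 ⟨hx.1, h'⟩ ⟨hb, le_refl b⟩ h'
          _ ≤ φ y := m2 ⟨le_refl b, hbδ⟩ ⟨h, hy.2⟩ h
  -- C1 : R convex on Ioo 0 δ
  have C1 : ConvexOn ℝ (Ioo 0 δ) R := by
    apply MonotoneOn.convexOn_of_deriv (convex_Ioo 0 δ)
    · intro x hx
      exact ((hRd x hx).differentiableAt.continuousAt).continuousWithinAt
    · rw [interior_Ioo]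
      intro x hx
      exact (hRd x hx).differentiableAt.differentiableWithinAt
    · rw [interior_Ioo]
      intro x hx y hy hxy
      rw [(hRd x hx).deriv, (hRd y hy).deriv]
      exact mφ hx hy hxy
  -- C2 : R convex on Ici b
  have hW0 : ∀ x : ℝ, b ≤ x → W x = 0 := by
    intro x hx
    simp only [hW]
    rw [max_eq_right (by rw [abs_of_pos (lt_of_lt_of_le hb hx)]; linarith)]
    ring
  have C2 : ConvexOn ℝ (Ici b) R := by
    apply convexOn_congr (hconv.subset (fun x hx => lt_of_lt_of_le hb hx) (convex_Ici b))
    intro x hx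
    simp only [hR]
    rw [hW0 x hx]; ring
  -- junction inequality
  have hjun : ∀ u w : ℝ, 0 < u → u < b → b < w →
      (R b - R u) / (b - u) ≤ (R w - R b) / (w - b) := by
    intro u w hu hub hbw
    have hbmem : b ∈ Ioo (0:ℝ) δ := ⟨hb, hbδ⟩
    have s1 : slope R u b ≤ deriv R b :=
      C1.slope_le_deriv ⟨hu, lt_trans hub hbδ⟩ hbmem hub (hRd b hbmem).differentiableAt
    have hderivRb : deriv R b = g b := by
      rw [(hRd b hbmem).deriv]
      simp only [hφ]
      rw [max_eq_right (by linarith)]; ring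
    have s2 : deriv V b ≤ slope V b w :=
      hconv.deriv_le_slope (mem_Ioi.2 hb) (mem_Ioi.2 (lt_trans hb hbw)) hbw
        (hVd b hbmem).differentiableAt
    have eVR : slope V b w = slope R b w := by
      rw [slope_def_field, slope_def_field]
      simp only [hR]
      rw [hW0 b (le_refl b), hW0 w (le_of_lt hbw)]
      ring_nf
    rw [slope_def_field] at s1
    rw [eVR, slope_def_field] at s2
    rw [hderivRb] at s1
    exact le_trans s1 s2
  -- glue
  have main : ConvexOn ℝ (Ioi (0:ℝ)) R := by
    apply convexOn_of_slope_mono_adjacent (convex_Ioi 0)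
    intro x y z hx hz hxy hyz
    simp only [mem_Ioi] at hx hz
    have hy0 : 0 < y := lt_trans hx hxy
    rcases le_total z b with hzb | hzb
    · -- all in Ioo 0 δ
      have hxm : x ∈ Ioo (0:ℝ) δ := ⟨hx, by linarith [lt_of_le_of_lt hzb hbδ, hxy, hyz]⟩
      have hzm : z ∈ Ioo (0:ℝ) δ := ⟨by linarith, lt_of_le_of_lt hzb hbδ⟩
      exact C1.slope_mono_adjacent hxm hzm hxy hyz
    · rcases le_total b x with hbx | hbx
      · exact C2.slope_mono_adjacent hbx (le_trans hbx (by linarith)) hxy hyz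
      · -- x ≤ b ≤ z; cases on y
        rcases lt_trichotomy y b with hyb | hyb | hyb
        · -- x < y < b
          rcases eq_or_lt_of_le hzb with hzb' | hzb'
          · -- z = b
            have hxm : x ∈ Ioo (0:ℝ) δ := ⟨hx, by linarith [hbδ, hxy, hyb]⟩
            have hzm : z ∈ Ioo (0:ℝ) δ := ⟨by linarith, by rw [← hzb']; exact hbδ⟩
            exact C1.slope_mono_adjacent hxm hzm hxy hyz
          · have hxm : x ∈ Ioo (0:ℝ) δ := ⟨hx, by linarith [hbδ, hxy, hyb]⟩
            have hym : y ∈ Ioo (0:ℝ) δ := ⟨hy0, lt_trans hyb hbδ⟩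
            have hbm : b ∈ Ioo (0:ℝ) δ := ⟨hb, hbδ⟩
            have h1 : (R y - R x) / (y - x) ≤ (R b - R y) / (b - y) :=
              C1.slope_mono_adjacent hxm hbm hxy hyb
            have h2 : (R b - R y) / (b - y) ≤ (R z - R b) / (z - b) :=
              hjun y z hy0 hyb hzb'
            exact slope_glue1 hxy hyb hzb' h1 h2
        · -- y = b : x < b < z
          subst hyb
          exact hjun x z hx hxy hyz
        · -- b < y
          rcases eq_or_lt_of_le hbx with hbx' | hbx'
          · -- x = b
            exact C2.slope_mono_adjacent (mem_Ici.2 (le_of_eq hbx'.symm)) (mem_Ici.2 (by linarith : b ≤ z)) hxy hyz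
          · have h1 : (R b - R x) / (b - x) ≤ (R y - R b) / (y - b) :=
              hjun x y hx hbx' hyb
            have h2 : (R y - R b) / (y - b) ≤ (R z - R y) / (z - y) :=
              C2.slope_mono_adjacent (mem_Ici.2 (le_refl b)) (mem_Ici.2 (by linarith : b ≤ z)) hyb hyz
            exact slope_glue2 hbx' hyb hyz h1 h2
  exact main

lemma period_nonneg (R : ℝ → ℝ) (hR : ConvexOn ℝ (Set.Ioi 0) R)
    (hRint : IntegrableOn R (Set.Ioi 0)) (a : ℝ) (ha : 0 < a) :
    0 ≤ ∫ x in Set.Ioi (0:ℝ), R x * Real.cos (a * x) := by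
  obtain ⟨T, hT⟩ : ∃ t : ℝ, t = 2 * π / a := ⟨_, rfl⟩
  have hπ := Real.pi_pos
  have hTpos : 0 < T := by rw [hT]; positivity
  have haT : a * T = 2 * π := by rw [hT]; field_simp
  obtain ⟨f, hf⟩ : ∃ g : ℝ → ℝ, g = fun x => R x * Real.cos (a * x) := ⟨_, rfl⟩
  have hfint : IntegrableOn f (Set.Ioi 0) := by
    have h2 : IntegrableOn (fun x => Real.cos (a * x) * R x) (Set.Ioi 0) :=
      hRint.bdd_mul ((Real.continuous_cos.comp (continuous_const.mul continuous_id)).aestronglyMeasurable)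
        (Filter.Eventually.of_forall fun x => by simpa using Real.abs_cos_le_one (a * x))
    rw [hf]
    exact h2.congr_fun (fun x _ => by ring) measurableSet_Ioi
  have hfIntOn : ∀ c d : ℝ, 0 ≤ c → 0 ≤ d → IntervalIntegrable f volume c d := by
    have key : ∀ c d : ℝ, 0 ≤ c → c ≤ d → IntervalIntegrable f volume c d := by
      intro c d hc h
      rw [intervalIntegrable_iff_integrableOn_Ioc_of_le h]
      exact hfint.mono_set (fun x hx => lt_of_le_of_lt hc hx.1)
    intro c d hc hd
    rcases le_total c d with h | h
    · exact key c d hc h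
    · exact (key d c hd h).symm
  -- each period integral is nonneg
  have hper : ∀ n : ℕ, 0 ≤ ∫ x in (n*T)..((n+1)*T), f x := by
    intro n
    obtain ⟨c, hc⟩ : ∃ t : ℝ, t = n * T := ⟨_, rfl⟩
    obtain ⟨p, hp⟩ : ∃ t : ℝ, t = c + T/4 := ⟨_, rfl⟩
    obtain ⟨q, hq⟩ : ∃ t : ℝ, t = c + 3*T/4 := ⟨_, rfl⟩
    have hc0 : 0 ≤ c := by rw [hc]; positivity
    have hp0 : 0 < p := by rw [hp]; rcases le_or_gt 0 c with h|h; positivity; nlinarith [hc0]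
    have hq0 : 0 < q := by rw [hq]; nlinarith [hc0]
    have hpq : p < q := by rw [hp, hq]; linarith
    obtain ⟨m, hm⟩ : ∃ t : ℝ, t = (R q - R p) / (q - p) := ⟨_, rfl⟩
    obtain ⟨l, hl⟩ : ∃ g : ℝ → ℝ, g = fun x => R p + m * (x - p) := ⟨_, rfl⟩
    have hac : a * c = n * (2 * π) := by
      rw [hc, show a * ((n:ℝ) * T) = (n:ℝ) * (a*T) by ring, haT]
    have hacT : a * (c + T) = (n+1) * (2 * π) := by
      rw [mul_add, hac, haT]; ring
    -- integral of l * cos over the period vanishes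
    have hcontl : Continuous (fun x => l x * Real.cos (a*x)) := by
      rw [hl]
      apply Continuous.mul
      · exact continuous_const.add (continuous_const.mul (continuous_id.sub continuous_const))
      · exact Real.continuous_cos.comp (continuous_const.mul continuous_id)
    have hlint : (∫ x in c..(c+T), l x * Real.cos (a * x)) = 0 := by
      have hF : ∀ x ∈ uIcc c (c+T), HasDerivAt
          (fun y => (R p + m*(y-p)) * Real.sin (a*y) / a + m * Real.cos (a*y) / a^2)
          (l x * Real.cos (a * x)) x := by
        intro x _
        have hax : HasDerivAt (fun y : ℝ => a * y) a x := by
          simpa using (hasDerivAt_id x).const_mul a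
        have hsin : HasDerivAt (fun y => Real.sin (a*y)) (Real.cos (a*x) * a) x :=
          (Real.hasDerivAt_sin (a*x)).comp x hax
        have hcos : HasDerivAt (fun y => Real.cos (a*y)) (-Real.sin (a*x) * a) x :=
          (Real.hasDerivAt_cos (a*x)).comp x hax
        have hlin : HasDerivAt (fun y : ℝ => R p + m*(y - p)) m x := by
          simpa using (((hasDerivAt_id x).sub_const p).const_mul m).const_add (R p)
        have := ((hlin.mul hsin).div_const a).add ((hcos.const_mul m).div_const (a^2))
        refine this.congr_deriv ?_
        simp only [hl]
        field_simp
        ring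
      rw [integral_eq_sub_of_hasDerivAt hF (hcontl.intervalIntegrable _ _)]
      have s1 : Real.sin (a*(c+T)) = 0 := by
        rw [hacT, show ((n:ℝ)+1)*(2*π) = ((2*(n+1) : ℕ) : ℝ) * π by push_cast; ring]
        exact Real.sin_nat_mul_pi _
      have s2 : Real.sin (a*c) = 0 := by
        rw [hac, show (n:ℝ)*(2*π) = ((2*n : ℕ) : ℝ) * π by push_cast; ring]
        exact Real.sin_nat_mul_pi _
      have c1 : Real.cos (a*(c+T)) = 1 := by
        rw [hacT, show ((n:ℝ)+1)*(2*π) = ((n+1 : ℕ) : ℝ) * (2*π) by push_cast; ring]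
        exact Real.cos_nat_mul_two_pi _
      have c2 : Real.cos (a*c) = 1 := by
        rw [hac]
        exact_mod_cast Real.cos_nat_mul_two_pi n
      rw [s1, s2, c1, c2]
      ring
    -- pointwise inequality
    have hmono := hR.slope_mono (mem_Ioi.2 hp0)
    have hq_mem : q ∈ Set.Ioi (0:ℝ) \ {p} := ⟨mem_Ioi.2 hq0, by simp; linarith⟩
    have hptw : ∀ x, x ∈ Ioc c (c + T) → 0 ≤ (f x - l x * Real.cos (a * x)) := by
      intro x hx
      have hx0 : 0 < x := lt_of_le_of_lt hc0 hx.1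
      have hθc : a * c < a * x := by
        exact mul_lt_mul_of_pos_left hx.1 ha
      have hθT : a * x ≤ a * (c + T) := by
        exact mul_le_mul_of_nonneg_left hx.2 ha.le
      obtain ⟨θ, hθ⟩ : ∃ t : ℝ, t = a * x - n * (2*π) := ⟨_, rfl⟩
      have hcos_eq : Real.cos (a * x) = Real.cos θ := by
        rw [show a * x = θ + (n:ℤ) * (2*π) by rw [hθ]; push_cast; ring]
        rw [Real.cos_add_int_mul_two_pi]
      have hθ0 : 0 < θ := by rw [hθ]; rw [hac] at hθc; linarith
      have hθ2π : θ ≤ 2*π := by rw [hθ]; rw [hacT] at hθT; push_cast at hθT ⊢; linarith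
      have hap : a * p = n * (2*π) + π/2 := by
        simp only [hp]; rw [mul_add, hac]
        have : a * (T/4) = π/2 := by rw [show T/4 = T/(4:ℝ) by ring]; field_simp [haT]; linarith [haT]
        rw [this]
      have haq : a * q = n * (2*π) + 3*π/2 := by
        simp only [hq]
        rw [mul_add, hac]
        have : a * (3*T/4) = 3*π/2 := by
          have h4 : a * (3*T/4) = 3*(a*T)/4 := by ring
          rw [h4, haT]; ring
        rw [this]
      have hfx : f x - l x * Real.cos (a*x) = (R x - l x) * Real.cos (a*x) := by
        rw [hf]; ring
      rw [hfx, hcos_eq]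
      -- case analysis
      rcases le_total x p with hxp | hxp
      · -- x ≤ p : cos θ ≥ 0, R x ≥ l x
        have hθp : θ ≤ π/2 := by
          have : a * x ≤ a * p := mul_le_mul_of_nonneg_left hxp ha.le
          rw [hap] at this; rw [hθ]; linarith
        have hcosnn : 0 ≤ Real.cos θ :=
          Real.cos_nonneg_of_mem_Icc ⟨by linarith, hθp⟩
        apply mul_nonneg _ hcosnn
        rcases eq_or_lt_of_le hxp with rfl | hxp'
        · rw [hl]; simp
        · -- x < p : slope R p x ≤ slope R p q = m
          have hx_mem : x ∈ Set.Ioi (0:ℝ) \ {p} := ⟨mem_Ioi.2 hx0, by simp; linarith⟩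
          have := hmono hx_mem hq_mem (by linarith : x ≤ q)
          rw [slope_def_field, slope_def_field] at this
          have hxp2 : x - p < 0 := by linarith
          rw [← hm] at this
          simp only [hl]
          rw [div_le_iff_of_neg hxp2] at this
          linarith
      · rcases le_total x q with hxq | hxq
        · -- p ≤ x ≤ q : cos θ ≤ 0, R x ≤ l x
          have hθp : π/2 ≤ θ := by
            have : a * p ≤ a * x := mul_le_mul_of_nonneg_left hxp ha.le
            rw [hap] at this; rw [hθ]; linarith
          have hθq : θ ≤ 3*π/2 := by
            have : a * x ≤ a * q := mul_le_mul_of_nonneg_left hxq ha.le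
            rw [haq] at this; rw [hθ]; linarith
          have hcosnp : Real.cos θ ≤ 0 :=
            Real.cos_nonpos_of_pi_div_two_le_of_le hθp (by linarith)
          have hRl : R x - l x ≤ 0 := by
            rcases eq_or_lt_of_le hxp with rfl | hxp'
            · rw [hl]; simp
            · rcases eq_or_lt_of_le hxq with heq | hxq'
              · have hqp0 : q - p ≠ 0 := by linarith
                rw [heq]; simp only [hl, hm]
                rw [div_mul_cancel₀ _ hqp0]
                simp
              · have hx_mem : x ∈ Set.Ioi (0:ℝ) \ {p} := ⟨mem_Ioi.2 hx0, by simp; linarith⟩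
                have := hmono hx_mem hq_mem (by linarith : x ≤ q)
                rw [slope_def_field, slope_def_field] at this
                have hxp2 : 0 < x - p := by linarith
                simp only [hl]
                have hmle : (R x - R p) ≤ m * (x - p) := by
                  rw [hm, div_mul_eq_mul_div, le_div_iff₀ (by linarith : (0:ℝ) < q - p)]
                  rw [div_le_div_iff₀ hxp2 (by linarith : (0:ℝ) < q - p)] at this
                  linarith
                linarith
          nlinarith [mul_nonneg (neg_nonneg.2 hRl) (neg_nonneg.2 hcosnp)]
        · -- q ≤ x : cos θ ≥ 0, R x ≥ l x
          have hθq : 3*π/2 ≤ θ := by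
            have : a * q ≤ a * x := mul_le_mul_of_nonneg_left hxq ha.le
            rw [haq] at this; rw [hθ]; linarith
          have hcosnn : 0 ≤ Real.cos θ := by
            rw [← Real.cos_sub_two_pi]
            exact Real.cos_nonneg_of_mem_Icc ⟨by linarith, by linarith⟩
          apply mul_nonneg _ hcosnn
          rcases eq_or_lt_of_le hxq with heq | hxq'
          · have hqp0 : q - p ≠ 0 := by linarith
            rw [← heq]; simp only [hl, hm]
            rw [div_mul_cancel₀ _ hqp0]
            simp
          · have hx_mem : x ∈ Set.Ioi (0:ℝ) \ {p} := ⟨mem_Ioi.2 hx0, by simp; linarith⟩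
            have := hmono hq_mem hx_mem (by linarith : q ≤ x)
            rw [slope_def_field, slope_def_field] at this
            have hxp2 : 0 < x - p := by linarith
            simp only [hl]
            rw [div_le_div_iff₀ (by linarith : (0:ℝ) < q - p) hxp2] at this
            have hmle : m * (x - p) ≤ (R x - R p) := by
              rw [hm, div_mul_eq_mul_div, div_le_iff₀ (by linarith : (0:ℝ) < q - p)]
              linarith
            linarith
    -- combine
    have hTadd : (n:ℝ)*T + T = ((n:ℕ)+1)*T := by push_cast; ring
    have hsplit : (∫ x in c..(c+T), f x)
        = (∫ x in c..(c+T), f x - l x * Real.cos (a*x)) + ∫ x in c..(c+T), l x * Real.cos (a*x) := by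
      rw [← integral_add ((hfIntOn c (c+T) hc0 (by linarith)).sub
            (hcontl.intervalIntegrable _ _)) (hcontl.intervalIntegrable _ _)]
      congr 1; ext x; ring
    have h1 : 0 ≤ ∫ x in c..(c+T), f x - l x * Real.cos (a*x) := by
      apply intervalIntegral.integral_nonneg_of_ae_restrict (by linarith : c ≤ c + T)
      have hc0' : volume.restrict (Icc c (c+T)) {c} = 0 := by
        rw [Measure.restrict_apply (measurableSet_singleton c)]
        exact measure_mono_null Set.inter_subset_left (Real.volume_singleton)
      have hne : ∀ᵐ x ∂(volume.restrict (Icc c (c+T))), x ≠ c := by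
        rw [ae_iff]
        convert hc0' using 2
        ext x; simp
      filter_upwards [hne, ae_restrict_mem measurableSet_Icc] with x hxc hx
      exact hptw x ⟨lt_of_le_of_ne hx.1 (Ne.symm hxc), hx.2⟩
    have hres : 0 ≤ ∫ x in c..(c+T), f x := by rw [hsplit, hlint]; linarith
    rw [← hc, show ((n:ℝ)+1)*T = c + T by rw [hc]; ring]
    exact hres
  -- sum up
  have hpartial : ∀ N : ℕ, (∫ x in (0:ℝ)..(N*T), f x) = ∑ n ∈ Finset.range N, ∫ x in (n*T)..((n+1)*T), f x := by
    intro N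
    have := intervalIntegral.sum_integral_adjacent_intervals (a := fun n : ℕ => n*T) (n := N)
      (fun k _ => hfIntOn _ _ (by positivity) (by positivity))
    simp only [Nat.cast_zero, zero_mul] at this
    rw [← this]
    apply Finset.sum_congr rfl
    intro k _
    congr 1
    push_cast
    ring
  have hlim : Filter.Tendsto (fun N : ℕ => ∫ x in (0:ℝ)..(N*T), f x) Filter.atTop
      (nhds (∫ x in Set.Ioi (0:ℝ), f x)) := by
    apply MeasureTheory.intervalIntegral_tendsto_integral_Ioi 0 hfint
    apply Filter.Tendsto.atTop_mul_const hTpos tendsto_natCast_atTop_atTop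
  have hgoal : (∫ x in Set.Ioi (0:ℝ), R x * Real.cos (a * x)) = ∫ x in Set.Ioi (0:ℝ), f x := by
    rw [hf]
  rw [hgoal]
  apply ge_of_tendsto' hlim
  intro N
  rw [hpartial N]
  apply Finset.sum_nonneg
  intro n _
  exact hper n

lemma Wcos_integral (lam b a : ℝ) (hlam : 0 < lam) (hb : 0 < b) (ha : 0 < a) :
    ∫ x in Set.Ioi (0:ℝ), (lam/2 * (max (b - x) 0)^2) * Real.cos (a*x)
      = lam/2 * (2*b/a^2 - 2*Real.sin (a*b)/a^3) := by
  have hWc : Continuous (fun x : ℝ => (lam/2 * (max (b - x) 0)^2) * Real.cos (a*x)) := by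
    apply Continuous.mul
    · exact continuous_const.mul (((continuous_const.sub continuous_id).max continuous_const).pow 2)
    · exact Real.continuous_cos.comp (continuous_const.mul continuous_id)
  have hsplit : Set.Ioc (0:ℝ) b ∪ Set.Ioi b = Set.Ioi 0 := Set.Ioc_union_Ioi_eq_Ioi hb.le
  rw [← hsplit, setIntegral_union (Set.Ioc_disjoint_Ioi le_rfl) measurableSet_Ioi
    ((hWc.continuousOn.integrableOn_compact isCompact_Icc).mono_set Set.Ioc_subset_Icc_self)
    ?_]
  · have hzero : ∫ x in Set.Ioi b, (lam/2 * (max (b - x) 0)^2) * Real.cos (a*x) = 0 := by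
      rw [setIntegral_congr_fun measurableSet_Ioi
        (g := fun _ => (0:ℝ)) (fun x hx => by
          rw [max_eq_right (by simp only [mem_Ioi] at hx; linarith)]
          ring)]
      simp
    rw [hzero, add_zero, ← intervalIntegral.integral_of_le hb.le]
    have hEq : Set.EqOn (fun x : ℝ => (lam/2 * (max (b - x) 0)^2) * Real.cos (a*x))
        (fun x : ℝ => (lam/2 * (b - x)^2) * Real.cos (a*x)) (Set.uIcc 0 b) := by
      intro x hx
      rw [Set.uIcc_of_le hb.le] at hx
      simp only
      rw [max_eq_left (by linarith [hx.2])]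
    rw [intervalIntegral.integral_congr hEq]
    have hF : ∀ x ∈ uIcc (0:ℝ) b, HasDerivAt
        (fun y => lam/2 * ((b-y)^2 * Real.sin (a*y)/a - 2*(b-y)*Real.cos (a*y)/a^2
          - 2*Real.sin (a*y)/a^3))
        ((lam/2 * (b - x)^2) * Real.cos (a*x)) x := by
      intro x _
      have hax : HasDerivAt (fun y : ℝ => a * y) a x := by
        simpa using (hasDerivAt_id x).const_mul a
      have hsin : HasDerivAt (fun y => Real.sin (a*y)) (Real.cos (a*x) * a) x :=
        (Real.hasDerivAt_sin (a*x)).comp x hax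
      have hcos : HasDerivAt (fun y => Real.cos (a*y)) (-Real.sin (a*x) * a) x :=
        (Real.hasDerivAt_cos (a*x)).comp x hax
      have hsq : HasDerivAt (fun y : ℝ => (b - y)^2) (-(2*(b-x))) x := by
        have := ((hasDerivAt_id x).const_sub b).pow 2
        refine this.congr_deriv ?_
        simp
      have hbx : HasDerivAt (fun y : ℝ => b - y) (-1) x := by
        simpa using (hasDerivAt_id x).const_sub b
      have hT1 : HasDerivAt (fun y => (b-y)^2 * Real.sin (a*y)/a)
          ((-(2*(b-x)) * Real.sin (a*x) + (b-x)^2 * (Real.cos (a*x) * a))/a) x :=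
        (hsq.mul hsin).div_const a
      have hT2 : HasDerivAt (fun y => 2*(b-y)*Real.cos (a*y)/a^2)
          (((2 * (-1)) * Real.cos (a*x) + 2*(b-x) * (-Real.sin (a*x) * a))/a^2) x := by
        exact (((hbx.const_mul 2).mul hcos).div_const (a^2))
      have hT3 : HasDerivAt (fun y => 2*Real.sin (a*y)/a^3)
          ((2 * (Real.cos (a*x) * a))/a^3) x := ((hsin.const_mul 2).div_const (a^3))
      have := ((hT1.sub hT2).sub hT3).const_mul (lam/2)
      refine this.congr_deriv ?_
      field_simp
      ring
    have hcont2 : Continuous (fun x : ℝ => (lam/2 * (b - x)^2) * Real.cos (a*x)) := by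
      apply Continuous.mul
      · exact continuous_const.mul ((continuous_const.sub continuous_id).pow 2)
      · exact Real.continuous_cos.comp (continuous_const.mul continuous_id)
    rw [integral_eq_sub_of_hasDerivAt hF (hcont2.intervalIntegrable _ _)]
    have hane : a ≠ 0 := ne_of_gt ha
    rw [mul_zero, Real.sin_zero, Real.cos_zero]
    field_simp
    ring
  · apply IntegrableOn.congr_fun (f := fun _ => (0:ℝ))
    · simp
    · intro x hx
      simp only
      rw [max_eq_right (by simp only [mem_Ioi] at hx; linarith : b - x ≤ 0)]
      ring
    · exact measurableSet_Ioi

lemma fourier_re (V : ℝ → ℝ) (hint : Integrable V) (ω : ℝ) :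
    (FourierTransform.fourier (fun x => (V x : ℂ)) ω).re
      = ∫ x : ℝ, V x * Real.cos (2*π*x*ω) := by
  rw [Real.fourier_real_eq_integral_exp_smul]
  have hintc : Integrable (fun x : ℝ => Complex.exp (↑(-2 * π * x * ω) * Complex.I) • (V x : ℂ)) := by
    simp_rw [smul_eq_mul]
    apply Integrable.bdd_mul (c := 1) hint.ofReal
    · apply Continuous.aestronglyMeasurable
      exact Complex.continuous_exp.comp ((Complex.continuous_ofReal.comp (by fun_prop)).mul
        continuous_const)
    · exact Filter.Eventually.of_forall (fun x => le_of_eq (Complex.norm_exp_ofReal_mul_I _))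
  have := ContinuousLinearMap.integral_comp_comm Complex.reCLM hintc
  have heq : (∫ v : ℝ, Complex.exp (↑(-2 * π * v * ω) * Complex.I) • (V v : ℂ)).re
      = ∫ x : ℝ, Complex.reCLM (Complex.exp (↑(-2 * π * x * ω) * Complex.I) • (V x : ℂ)) := by
    rw [this]
    rfl
  rw [heq]
  congr 1
  ext x
  simp only [Complex.reCLM_apply, smul_eq_mul, Complex.mul_re, Complex.ofReal_re,
    Complex.ofReal_im, mul_zero, sub_zero, Complex.exp_ofReal_mul_I_re]
  rw [show (-2*π*x*ω) = -(2*π*x*ω) by ring, Real.cos_neg]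
  ring
theorem stmt0 (V : ℝ → ℝ) (lam δ : ℝ) (hlam : 0 < lam) (hδ : 0 < δ)
    (heven : ∀ x, V (-x) = V x)
    (hconv : ConvexOn ℝ (Set.Ioi 0) V)
    (hnonneg : ∀ x, 0 ≤ V x)
    (hint : Integrable V)
    (hnorm : ∫ x, V x = 1)
    (hV'' : ∀ z : ℝ, 0 < z → (if z < δ then lam else 0) ≤ deriv (deriv V) z) :
    ∃ c > 0, ∀ ω : ℝ,
      c / max 1 (ω ^ 2) ≤ (FourierTransform.fourier (fun x => (V x : ℂ)) ω).re := by
  have hπ := Real.pi_pos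
  have hb : (0:ℝ) < δ/2 := by linarith
  have hs1 : Real.sin 1 < 1 := by simpa using Real.sin_lt one_pos
  have hκ : (0:ℝ) < (1 - Real.sin 1)/2 := by linarith
  set κ : ℝ := (1 - Real.sin 1)/2 with hκdef
  have hV2 : ∀ z : ℝ, 0 < z → z < δ → lam ≤ deriv (deriv V) z := by
    intro z hz hzδ
    have := hV'' z hz
    rwa [if_pos hzδ] at this
  have hVd := Vdiff V lam δ hlam hδ hconv hV2
  have hRconv := Rconv V lam δ hlam hδ hconv hVd hV2
  obtain ⟨W, hW⟩ : ∃ g : ℝ → ℝ, g = fun x => lam/2 * (max (δ/2 - |x|) 0)^2 := ⟨_, rfl⟩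
  have hWcont : Continuous W := by
    rw [hW]
    exact continuous_const.mul
      (((continuous_const.sub continuous_abs).max continuous_const).pow 2)
  have hWint : Integrable W := by
    apply hWcont.integrable_of_hasCompactSupport
    apply HasCompactSupport.intro (isCompact_Icc (a := -(δ/2)) (b := δ/2))
    intro x hx
    simp only [mem_Icc, not_and_or, not_le] at hx
    simp only [hW]
    have : δ/2 - |x| ≤ 0 := by
      rcases hx with h | h
      · rw [abs_of_neg (by linarith)]; linarith
      · rw [abs_of_pos (by linarith)]; linarith
    rw [max_eq_right this]
    simp
  set c : ℝ := min 1 (min (2*lam*(δ/2)^3/9) (lam*κ*(δ/2)/(2*π^2))) with hcdef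
  have hc0 : 0 < c := by
    apply lt_min one_pos
    apply lt_min
    · positivity
    · positivity
  refine ⟨c, hc0, fun ω => ?_⟩
  rw [fourier_re V hint ω]
  rcases eq_or_ne ω 0 with rfl | hω
  · simp only [mul_zero, Real.cos_zero, mul_one]
    rw [hnorm]
    have : max (1:ℝ) ((0:ℝ)^2) = 1 := by norm_num
    rw [this, div_one]
    exact min_le_left _ _
  · -- ω ≠ 0
    have hω2 : 0 < ω^2 := by positivity
    set a : ℝ := 2*π*|ω| with hadef
    have ha : 0 < a := by
      have : 0 < |ω| := abs_pos.2 hω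
      positivity
    have ha2 : a^2 = 4*π^2*ω^2 := by
      rw [hadef]
      rw [show (2*π*|ω|)^2 = 4*π^2*|ω|^2 by ring, sq_abs]
    -- even reduction
    have heq1 : (fun x : ℝ => V x * Real.cos (2*π*x*ω))
        = fun x => (fun t => V t * Real.cos (a*t)) |x| := by
      funext x
      simp only
      have hV : V |x| = V x := by
        rcases abs_cases x with ⟨h, _⟩ | ⟨h, _⟩
        · rw [h]
        · rw [h, heven]
      have hcosa : Real.cos (a * |x|) = Real.cos (2*π*x*ω) := by
        have habs : a * |x| = |2*π*x*ω| := by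
          rw [hadef, abs_mul, abs_mul, abs_of_pos (by positivity : (0:ℝ) < 2*π)]
          ring
        rw [habs, Real.cos_abs]
      rw [hV, hcosa]
    rw [heq1, integral_comp_abs (f := fun t => V t * Real.cos (a * t))]
    -- split into W part and R part on Ioi 0
    have hcos_cont : Continuous (fun x : ℝ => Real.cos (a*x)) :=
      Real.continuous_cos.comp (continuous_const.mul continuous_id)
    have hcos_bd : ∀ x : ℝ, ‖Real.cos (a*x)‖ ≤ 1 := fun x => by
      simpa using Real.abs_cos_le_one (a*x)
    have hVcos : Integrable (fun x => V x * Real.cos (a*x)) := by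
      have h2 : Integrable (fun x => Real.cos (a*x) * V x) :=
        hint.bdd_mul hcos_cont.aestronglyMeasurable (Filter.Eventually.of_forall hcos_bd)
      exact h2.congr (Filter.Eventually.of_forall fun x => by ring)
    have hWcos : Integrable (fun x => W x * Real.cos (a*x)) := by
      have h2 : Integrable (fun x => Real.cos (a*x) * W x) :=
        hWint.bdd_mul hcos_cont.aestronglyMeasurable (Filter.Eventually.of_forall hcos_bd)
      exact h2.congr (Filter.Eventually.of_forall fun x => by ring)
    have hRcos : Integrable (fun x => (V x - W x) * Real.cos (a*x)) := by
      have h2 := hVcos.sub hWcos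
      exact h2.congr (Filter.Eventually.of_forall fun x => by simp only [Pi.sub_apply]; ring)
    have hsplitInt : (∫ x in Set.Ioi (0:ℝ), V x * Real.cos (a*x))
        = (∫ x in Set.Ioi (0:ℝ), (lam/2 * (max (δ/2 - x) 0)^2) * Real.cos (a*x))
          + ∫ x in Set.Ioi (0:ℝ), (V x - W x) * Real.cos (a*x) := by
      rw [← MeasureTheory.integral_add]
      · apply setIntegral_congr_fun measurableSet_Ioi
        intro x hx
        simp only [hW]
        rw [abs_of_pos (mem_Ioi.1 hx)]
        ring
      · have h3 : IntegrableOn (fun x => (lam/2 * (max (δ/2 - x) 0)^2) * Real.cos (a*x)) (Set.Ioi 0) := by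
          apply (hWcos.integrableOn).congr_fun _ measurableSet_Ioi
          intro x hx
          simp only [hW]
          rw [abs_of_pos (mem_Ioi.1 hx)]
        exact h3
      · exact hRcos.integrableOn
    rw [hsplitInt]
    -- R part nonneg
    have hIR : 0 ≤ ∫ x in Set.Ioi (0:ℝ), (V x - W x) * Real.cos (a*x) := by
      have hconvR : ConvexOn ℝ (Set.Ioi 0) (fun x => V x - W x) := by
        rw [hW]; exact hRconv
      exact period_nonneg _ hconvR (hint.sub hWint).integrableOn a ha
    -- W part explicit
    rw [Wcos_integral lam (δ/2) a hlam hb ha]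
    -- numeric endgame
    set t : ℝ := a * (δ/2) with htdef
    have ht0 : 0 < t := by positivity
    have hIW : lam/2 * (2*(δ/2)/a^2 - 2*Real.sin (a*(δ/2))/a^3)
        = lam * (t - Real.sin t) / a^3 := by
      rw [← htdef]
      field_simp
      ring
    rw [hIW]
    rcases le_total t 1 with ht1 | ht1
    · -- small frequency regime
      have hkey := sinlb1 ht0.le ht1
      have hlow : 2*lam*(δ/2)^3/9 ≤ 2 * (lam * (t - Real.sin t) / a^3) := by
        have hδ2 : (δ/2) = t/a := by rw [htdef]; field_simp
        have h1 : 2*lam*(δ/2)^3/9 = 2*(lam*(t^3/9)/a^3) := by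
          rw [hδ2, div_pow]
          field_simp
        rw [h1]
        gcongr
      have hcle : c ≤ 2*lam*(δ/2)^3/9 := le_trans (min_le_right _ _) (min_le_left _ _)
      have hmax1 : (1:ℝ) ≤ max 1 (ω^2) := le_max_left _ _
      have : c / max 1 (ω^2) ≤ c := by
        apply div_le_self hc0.le hmax1
      linarith
    · -- large frequency regime
      have hkey := sinlb2 ht1
      have hlow : lam*κ*(δ/2)/(2*π^2) / ω^2 ≤ 2 * (lam * (t - Real.sin t) / a^3) := by
        have e1 : 2*(lam*(κ*t)/a^3) = lam*κ*(δ/2)/(2*π^2)/ω^2 := by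
          rw [htdef, show a^3 = a * a^2 by ring, ha2]
          have hane : a ≠ 0 := ne_of_gt ha
          have hωne : ω ≠ 0 := hω
          have hπne : π ≠ 0 := ne_of_gt hπ
          field_simp
          ring
        rw [← e1]
        gcongr
      have hcle : c ≤ lam*κ*(δ/2)/(2*π^2) := le_trans (min_le_right _ _) (min_le_right _ _)
      have h1 : c / max 1 (ω^2) ≤ c / ω^2 :=
        div_le_div_of_nonneg_left hc0.le hω2 (le_max_right _ _)
      have h2 : c / ω^2 ≤ lam*κ*(δ/2)/(2*π^2) / ω^2 := by
        gcongr
      linarith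
end

section
/- Let V : ℝ → ℝ be nonnegative, even, non-increasing on (0,∞), and integrable. Then for any signed measure ν on [0,∞) with locally bounded positive part, ∫_{-∞}^0 (V * ν⁺)(y) dy ≤ (Σ_{k=0}^∞ ∫_k^∞ V) · sup_{x≥0} ν⁺([x,x+1]), and the constant Σ_{k=0}^∞ ∫_k^∞ V(y) dy is finite whenever ∫_ℝ |x| V(x) dx < ∞. -/
open MeasureTheory Set
open scoped ENNReal

theorem stmt6 (V : ℝ → ℝ) (μ : Measure ℝ) (m : ℝ)
    (hVnonneg : ∀ x, 0 ≤ V x) (heven : ∀ x, V (-x) = V x)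
    (hanti : AntitoneOn V (Set.Ioi 0))
    (hint : Integrable V)
    (hmom : Integrable (fun x => |x| * V x))
    (hμsupp : μ (Set.Iio 0) = 0)
    (hm : ∀ x : ℝ, 0 ≤ x → μ (Set.Icc x (x + 1)) ≤ ENNReal.ofReal m) :
    (∫⁻ y in Set.Iio 0, ∫⁻ z, ENNReal.ofReal (V (y - z)) ∂μ) ≤
      (∑' k : ℕ, ENNReal.ofReal (∫ y in Set.Ici (k : ℝ), V y)) * ENNReal.ofReal m ∧
    (∑' k : ℕ, ENNReal.ofReal (∫ y in Set.Ici (k : ℝ), V y)) < ⊤ := by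
  have hVae : AEMeasurable V := hint.aemeasurable
  -- key : ofReal of integral over Ici k equals lintegral over Ioi k
  have key : ∀ k : ℕ, ENNReal.ofReal (∫ y in Set.Ici (k : ℝ), V y)
      = ∫⁻ y in Set.Ioi (k : ℝ), ENNReal.ofReal (V y) := by
    intro k
    have h1 : ENNReal.ofReal (∫ y in Set.Ici (k : ℝ), V y)
        = ∫⁻ y in Set.Ici (k : ℝ), ENNReal.ofReal (V y) :=
      ofReal_integral_eq_lintegral_ofReal (hint.restrict)
        (Filter.Eventually.of_forall fun x => hVnonneg x)
    rw [h1, Measure.restrict_congr_set Ioi_ae_eq_Ici.symm]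
  -- substitution lemma
  have hemb : ∀ c : ℝ, MeasurableEmbedding (fun y : ℝ => c - y) := fun c =>
    (MeasurableEquiv.subLeft c).measurableEmbedding
  have hmp : ∀ c : ℝ, MeasurePreserving (fun y : ℝ => c - y) volume volume := fun c =>
    Measure.measurePreserving_sub_left volume c
  have hpre : ∀ c : ℝ, (fun y : ℝ => c - y) ⁻¹' Set.Ioi c = Set.Iio 0 := by
    intro c; ext y
    simp only [Set.mem_preimage, Set.mem_Ioi, Set.mem_Iio]
    constructor <;> intro h <;> linarith
  have hmpres : ∀ c : ℝ, MeasurePreserving (fun y : ℝ => c - y)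
      (volume.restrict (Set.Iio 0)) (volume.restrict (Set.Ioi c)) := by
    intro c
    have := (hmp c).restrict_preimage (measurableSet_Ioi (a := c))
    rwa [hpre c] at this
  have hsub : ∀ c : ℝ, (∫⁻ y in Set.Iio 0, ENNReal.ofReal (V (c - y)))
      = ∫⁻ y in Set.Ioi c, ENNReal.ofReal (V y) := by
    intro c
    exact (hmpres c).lintegral_comp_emb (hemb c) (fun y => ENNReal.ofReal (V y))
  have haemk : ∀ c : ℝ, AEMeasurable (fun y => ENNReal.ofReal (V (c - y)))
      (volume.restrict (Set.Iio 0)) := by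
    intro c
    have h1 : AEMeasurable V (volume.restrict (Set.Ioi c)) := hVae.restrict
    rw [← (hmpres c).map_eq] at h1
    exact (h1.comp_measurable (hmpres c).measurable).ennreal_ofReal
  constructor
  · -- main inequality
    have step1 : ∀ y ∈ Set.Iio (0 : ℝ), (∫⁻ z, ENNReal.ofReal (V (y - z)) ∂μ)
        ≤ ∑' k : ℕ, ENNReal.ofReal (V ((k : ℝ) - y)) * ENNReal.ofReal m := by
      intro y hy
      rw [Set.mem_Iio] at hy
      have hae : ∀ᵐ z ∂μ, 0 ≤ z := by
        rw [ae_iff]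
        simp only [not_le]; exact hμsupp
      calc (∫⁻ z, ENNReal.ofReal (V (y - z)) ∂μ)
          ≤ ∫⁻ z, ∑' k : ℕ, (Set.Ico (k : ℝ) (k + 1)).indicator
              (fun _ => ENNReal.ofReal (V ((k : ℝ) - y))) z ∂μ := by
            refine lintegral_mono_ae ?_
            filter_upwards [hae] with z hz
            set k0 : ℕ := ⌊z⌋.toNat with hk0
            have hfl : ((k0 : ℝ)) = (⌊z⌋ : ℝ) := by
              rw [hk0]
              exact_mod_cast congrArg Int.cast (Int.toNat_of_nonneg (Int.floor_nonneg.2 hz))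
            have h1 : (k0 : ℝ) ≤ z := by rw [hfl]; exact Int.floor_le z
            have h2 : z < (k0 : ℝ) + 1 := by rw [hfl]; exact Int.lt_floor_add_one z
            have hle : ENNReal.ofReal (V (y - z))
                ≤ (Set.Ico (k0 : ℝ) (k0 + 1)).indicator
                  (fun _ => ENNReal.ofReal (V ((k0 : ℝ) - y))) z := by
              rw [Set.indicator_of_mem (Set.mem_Ico.mpr ⟨h1, h2⟩)]
              apply ENNReal.ofReal_le_ofReal
              rw [show y - z = -(z - y) by ring, heven]
              have hk0nn : (0 : ℝ) ≤ (k0 : ℝ) := Nat.cast_nonneg k0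
              exact hanti (Set.mem_Ioi.2 (by linarith)) (Set.mem_Ioi.2 (by linarith))
                (by linarith)
            exact hle.trans (ENNReal.le_tsum k0)
        _ = ∑' k : ℕ, ENNReal.ofReal (V ((k : ℝ) - y)) * μ (Set.Ico (k : ℝ) (k + 1)) := by
            rw [lintegral_tsum (fun k : ℕ =>
              ((measurable_const.indicator measurableSet_Ico).aemeasurable))]
            exact tsum_congr fun k => lintegral_indicator_const measurableSet_Ico _
        _ ≤ ∑' k : ℕ, ENNReal.ofReal (V ((k : ℝ) - y)) * ENNReal.ofReal m := by
            refine ENNReal.tsum_le_tsum fun k => mul_le_mul_right ?_ _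
            exact le_trans (measure_mono Set.Ico_subset_Icc_self) (hm k (Nat.cast_nonneg k))
    calc (∫⁻ y in Set.Iio 0, ∫⁻ z, ENNReal.ofReal (V (y - z)) ∂μ)
        ≤ ∫⁻ y in Set.Iio 0, ∑' k : ℕ, ENNReal.ofReal (V ((k : ℝ) - y)) * ENNReal.ofReal m := by
          refine lintegral_mono_ae ?_
          filter_upwards [ae_restrict_mem measurableSet_Iio] with y hy
          exact step1 y hy
      _ = ∑' k : ℕ, ∫⁻ y in Set.Iio 0, ENNReal.ofReal (V ((k : ℝ) - y)) * ENNReal.ofReal m := by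
          rw [lintegral_tsum (fun k : ℕ => ((haemk k).mul_const _))]
      _ = ∑' k : ℕ, (∫⁻ y in Set.Iio 0, ENNReal.ofReal (V ((k : ℝ) - y))) * ENNReal.ofReal m := by
          exact tsum_congr fun k => lintegral_mul_const'' _ (haemk k)
      _ = ∑' k : ℕ, ENNReal.ofReal (∫ y in Set.Ici (k : ℝ), V y) * ENNReal.ofReal m := by
          exact tsum_congr fun k => by rw [hsub, key]
      _ = (∑' k : ℕ, ENNReal.ofReal (∫ y in Set.Ici (k : ℝ), V y)) * ENNReal.ofReal m :=
          ENNReal.tsum_mul_right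
  · -- finiteness
    have hbound : ∀ y : ℝ, (∑' k : ℕ, (Set.Ioi (k : ℝ)).indicator
        (fun t => ENNReal.ofReal (V t)) y) ≤ ENNReal.ofReal ((|y| + 1) * V y) := by
      intro y
      rcases le_or_gt y 0 with hy | hy
      · have : ∀ k : ℕ, (Set.Ioi (k : ℝ)).indicator (fun t => ENNReal.ofReal (V t)) y = 0 := by
          intro k
          apply Set.indicator_of_notMem
          simp only [Set.mem_Ioi, not_lt]
          exact le_trans hy (Nat.cast_nonneg k)
        simp [this]
      · set N : ℕ := ⌈y⌉₊ with hN
        have hvanish : ∀ k ∉ Finset.range N,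
            (Set.Ioi (k : ℝ)).indicator (fun t => ENNReal.ofReal (V t)) y = 0 := by
          intro k hk
          apply Set.indicator_of_notMem
          simp only [Set.mem_Ioi, not_lt]
          have : N ≤ k := by simpa [Finset.mem_range, not_lt] using hk
          calc y ≤ (N : ℝ) := Nat.le_ceil y
            _ ≤ (k : ℝ) := by exact_mod_cast this
        rw [tsum_eq_sum hvanish]
        have hterm : ∀ k ∈ Finset.range N,
            (Set.Ioi (k : ℝ)).indicator (fun t => ENNReal.ofReal (V t)) y
              ≤ ENNReal.ofReal (V y) :=
          fun k _ => Set.indicator_le_self _ _ y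
        calc ∑ k ∈ Finset.range N, (Set.Ioi (k : ℝ)).indicator (fun t => ENNReal.ofReal (V t)) y
            ≤ ∑ _k ∈ Finset.range N, ENNReal.ofReal (V y) := Finset.sum_le_sum hterm
          _ = (N : ℝ≥0∞) * ENNReal.ofReal (V y) := by
              rw [Finset.sum_const, Finset.card_range, nsmul_eq_mul]
          _ ≤ ENNReal.ofReal (|y| + 1) * ENNReal.ofReal (V y) := by
              refine mul_le_mul_left ?_ _
              rw [show ((N : ℝ≥0∞)) = ENNReal.ofReal (N : ℝ) by
                rw [ENNReal.ofReal_natCast]]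
              apply ENNReal.ofReal_le_ofReal
              have : (N : ℝ) < y + 1 := Nat.ceil_lt_add_one hy.le
              rw [abs_of_pos hy]; linarith
          _ = ENNReal.ofReal ((|y| + 1) * V y) := by
              rw [← ENNReal.ofReal_mul (by positivity)]
    have hintb : Integrable (fun y => (|y| + 1) * V y) := by
      have : (fun y => (|y| + 1) * V y) = fun y => |y| * V y + V y := by
        funext y; ring
      rw [this]
      exact hmom.add hint
    calc (∑' k : ℕ, ENNReal.ofReal (∫ y in Set.Ici (k : ℝ), V y))
        = ∑' k : ℕ, ∫⁻ y, (Set.Ioi (k : ℝ)).indicator (fun t => ENNReal.ofReal (V t)) y := by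
          refine tsum_congr fun k => ?_
          rw [key, lintegral_indicator measurableSet_Ioi]
      _ = ∫⁻ y, ∑' k : ℕ, (Set.Ioi (k : ℝ)).indicator (fun t => ENNReal.ofReal (V t)) y := by
          rw [lintegral_tsum (fun k : ℕ => (hVae.ennreal_ofReal.indicator measurableSet_Ioi))]
      _ ≤ ∫⁻ y, ENNReal.ofReal ((|y| + 1) * V y) := lintegral_mono hbound
      _ < ⊤ := hintb.lintegral_lt_top
end

section
/- Let V be nonnegative, even, integrable, and non-increasing on (0,∞) with ∫_0^1 V > 0. Then for any nonnegative Radon measure μ on [0,∞) and any x ≥ 0, μ([x,x+1]) ≤ (∫_0^1 V)^{-1} ∫_x^{x+1} (V * μ)(y) dy. -/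
open MeasureTheory Set

lemma meas_of_even_anti (V : ℝ → ℝ) (heven : ∀ x, V (-x) = V x)
    (hanti : AntitoneOn V (Set.Ioi 0)) : Measurable V := by
  apply measurable_of_Iio
  intro c
  have hpos : MeasurableSet (V ⁻¹' Iio c ∩ Ioi 0) := by
    apply Set.OrdConnected.measurableSet
    refine ordConnected_def.mpr fun a ha b hb t ht => ?_
    have hta : (0:ℝ) < t := lt_of_lt_of_le ha.2 ht.1
    exact ⟨lt_of_le_of_lt (hanti ha.2 hta ht.1) ha.1, hta⟩
  have hzero : MeasurableSet (V ⁻¹' Iio c ∩ {(0:ℝ)}) :=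
    Set.Subsingleton.measurableSet (Set.subsingleton_singleton.anti inter_subset_right)
  have hnegset : V ⁻¹' Iio c ∩ Iio 0 = Neg.neg ⁻¹' (V ⁻¹' Iio c ∩ Ioi 0) := by
    ext t
    simp only [mem_inter_iff, mem_preimage, mem_Iio, mem_Ioi]
    constructor
    · rintro ⟨h1, h2⟩
      exact ⟨by rwa [heven], by linarith⟩
    · rintro ⟨h1, h2⟩
      rw [heven] at h1
      exact ⟨h1, by linarith⟩
  have hdecomp : V ⁻¹' Iio c =
      (V ⁻¹' Iio c ∩ Iio 0) ∪ (V ⁻¹' Iio c ∩ {(0:ℝ)}) ∪ (V ⁻¹' Iio c ∩ Ioi 0) := by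
    ext t
    rcases lt_trichotomy t 0 with h | h | h <;>
      simp [mem_Iio, mem_Ioi, h, h.le] <;> tauto
  rw [hdecomp]
  exact ((hnegset ▸ measurable_neg hpos).union hzero).union hpos

lemma key_interval (V : ℝ → ℝ) (hVnonneg : ∀ x, 0 ≤ V x) (heven : ∀ x, V (-x) = V x)
    (hanti : AntitoneOn V (Set.Ioi 0)) (hint : Integrable V) {a : ℝ} (ha : 0 ≤ a) (ha1 : a ≤ 1) :
    (∫ y in (0:ℝ)..1, V y) ≤ ∫ t in (-a)..(1-a), V t := by
  have hII : ∀ p q : ℝ, IntervalIntegrable V volume p q := fun p q => hint.intervalIntegrable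
  have h1 : ∫ t in (-a)..(1-a), V t = (∫ t in (-a)..0, V t) + ∫ t in (0:ℝ)..(1-a), V t :=
    (intervalIntegral.integral_add_adjacent_intervals (hII _ _) (hII _ _)).symm
  have h2 : ∫ t in (-a)..0, V t = ∫ t in (0:ℝ)..a, V t := by
    have := intervalIntegral.integral_comp_neg (a := 0) (b := a) V
    simp only [heven, neg_zero] at this
    rw [← this]
  have h3 : ∫ t in (0:ℝ)..1, V t = (∫ t in (0:ℝ)..a, V t) + ∫ t in a..1, V t :=
    (intervalIntegral.integral_add_adjacent_intervals (hII _ _) (hII _ _)).symm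
  have h4 : ∫ t in a..1, V t = ∫ t in (0:ℝ)..(1-a), V (t + a) := by
    rw [intervalIntegral.integral_comp_add_right]
    norm_num
  have h5 : ∫ t in (0:ℝ)..(1-a), V (t + a) ≤ ∫ t in (0:ℝ)..(1-a), V t := by
    apply intervalIntegral.integral_mono_ae_restrict (by linarith)
      ((hint.comp_add_right a).intervalIntegrable) (hII _ _)
    have h0 : ∀ᵐ t : ℝ ∂(volume.restrict (Icc (0:ℝ) (1-a))), t ≠ 0 := by
      apply ae_restrict_of_ae
      rw [ae_iff]
      have : {t : ℝ | ¬ t ≠ 0} = {0} := by ext t; simp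
      rw [this]
      exact Real.volume_singleton
    filter_upwards [ae_restrict_mem measurableSet_Icc, h0] with t ht htne
    have ht0 : 0 < t := lt_of_le_of_ne ht.1 (Ne.symm htne)
    exact hanti (mem_Ioi.mpr ht0) (mem_Ioi.mpr (by linarith)) (le_add_of_nonneg_right ha)
  linarith

theorem stmt7 (V : ℝ → ℝ) (μ : Measure ℝ) [IsLocallyFiniteMeasure μ]
    (hVnonneg : ∀ x, 0 ≤ V x) (heven : ∀ x, V (-x) = V x)
    (hanti : AntitoneOn V (Set.Ioi 0))
    (hint : Integrable V)
    (hμsupp : μ (Set.Iio 0) = 0)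
    (x : ℝ) (hx : 0 ≤ x) :
    μ (Set.Icc x (x + 1)) * ENNReal.ofReal (∫ y in (0:ℝ)..1, V y) ≤
      ∫⁻ y in Set.Icc x (x + 1), ∫⁻ z, ENNReal.ofReal (V (y - z)) ∂μ := by
  set I := Set.Icc x (x + 1) with hI
  set c := ENNReal.ofReal (∫ y in (0:ℝ)..1, V y) with hc
  have hVmeas := meas_of_even_anti V heven hanti
  have key : ∀ z ∈ I, c ≤ ∫⁻ y in I, ENNReal.ofReal (V (y - z)) := by
    intro z hz
    have hintz : Integrable (fun y => V (y - z)) := hint.comp_sub_right z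
    have heq : ∫⁻ y in I, ENNReal.ofReal (V (y - z)) = ENNReal.ofReal (∫ y in I, V (y - z)) :=
      (ofReal_integral_eq_lintegral_ofReal hintz.integrableOn
        (ae_of_all _ fun y => hVnonneg _)).symm
    rw [heq]
    apply ENNReal.ofReal_le_ofReal
    have hchg : ∫ y in I, V (y - z) = ∫ t in (-(z-x))..(1-(z-x)), V t := by
      rw [hI, integral_Icc_eq_integral_Ioc,
        ← intervalIntegral.integral_of_le (by linarith : x ≤ x + 1),
        intervalIntegral.integral_comp_sub_right]
      congr 1 <;> ring
    rw [hchg]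
    exact key_interval V hVnonneg heven hanti hint (by linarith [hz.1]) (by linarith [hz.2])
  have hmeas2 : AEMeasurable (Function.uncurry fun z y => ENNReal.ofReal (V (y - z)))
      ((μ.restrict I).prod (volume.restrict I)) :=
    ((hVmeas.comp (measurable_snd.sub measurable_fst)).ennreal_ofReal).aemeasurable
  calc μ I * c = ∫⁻ _ in I, c ∂μ := by rw [setLIntegral_const, mul_comm]
    _ ≤ ∫⁻ z in I, (∫⁻ y in I, ENNReal.ofReal (V (y - z))) ∂μ := by
        refine lintegral_mono_ae ?_
        filter_upwards [ae_restrict_mem measurableSet_Icc] with z hz using key z hz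
    _ = ∫⁻ y in I, (∫⁻ z in I, ENNReal.ofReal (V (y - z)) ∂μ) := by
        exact lintegral_lintegral_swap hmeas2
    _ ≤ ∫⁻ y in I, ∫⁻ z, ENNReal.ofReal (V (y - z)) ∂μ :=
        lintegral_mono fun y => setLIntegral_le_lintegral _ _
end
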